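/- Let β₁ > β₂ and β₁' > β₂' be reals, and let g be the unique real 2×2 matrix whose column sums both equal 1 and which satisfies the row vector identity (β₁',β₂')·g = (β₁,β₂). Let T := {(S₁,S₂) ∈ ℝ² : S₁ ≥ 0, S₂ ≥ 0, S₁+S₂ ≤ 1}. Then g maps T into T (acting on column vectors) if and only if β₂' ≤ β₂ and β₁ ≤ β₁'. -/
import Mathlib


/-- `g` maps the physical triangle into itself iff
`β₂' ≤ β₂` and `β₁ ≤ β₁'`. -/
theorem stmt_3 (β₁ β₂ β₁' β₂' : ℝ) (h : β₁ > β₂) (h' : β₁' > β₂')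
    (g : Matrix (Fin 2) (Fin 2) ℝ)
    (hcol₁ : g 0 0 + g 1 0 = 1) (hcol₂ : g 0 1 + g 1 1 = 1)
    (hg : Matrix.vecMul ![β₁', β₂'] g = ![β₁, β₂]) :
    (∀ S : Fin 2 → ℝ, (0 ≤ S 0 ∧ 0 ≤ S 1 ∧ S 0 + S 1 ≤ 1) →
        (0 ≤ g.mulVec S 0 ∧ 0 ≤ g.mulVec S 1 ∧ g.mulVec S 0 + g.mulVec S 1 ≤ 1)) ↔
      (β₂' ≤ β₂ ∧ β₁ ≤ β₁') := by
  have e1 : β₁' * g 0 0 + β₂' * g 1 0 = β₁ := by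
    have := congrFun hg 0
    simpa [Matrix.vecMul, dotProduct, Fin.sum_univ_two] using this
  have e2 : β₁' * g 0 1 + β₂' * g 1 1 = β₂ := by
    have := congrFun hg 1
    simpa [Matrix.vecMul, dotProduct, Fin.sum_univ_two] using this
  have k00 : (β₁' - β₂') * g 0 0 = β₁ - β₂' := by linear_combination e1 - β₂' * hcol₁
  have k10 : (β₁' - β₂') * g 1 0 = β₁' - β₁ := by linear_combination β₁' * hcol₁ - e1
  have k01 : (β₁' - β₂') * g 0 1 = β₂ - β₂' := by linear_combination e2 - β₂' * hcol₂
  have k11 : (β₁' - β₂') * g 1 1 = β₁' - β₂ := by linear_combination β₁' * hcol₂ - e2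
  have hd : (0:ℝ) < β₁' - β₂' := sub_pos.mpr h'
  constructor
  · intro H
    have h1 := H ![1, 0] (by norm_num)
    have h2 := H ![0, 1] (by norm_num)
    simp [Matrix.mulVec, dotProduct, Fin.sum_univ_two] at h1 h2
    obtain ⟨a1, b1, _⟩ := h1
    obtain ⟨a2, b2, _⟩ := h2
    constructor
    · nlinarith [mul_nonneg hd.le a2]
    · nlinarith [mul_nonneg hd.le b1]
  · rintro ⟨hb2, hb1⟩ S ⟨hS0, hS1, hSsum⟩
    have hg00 : 0 ≤ g 0 0 := nonneg_of_mul_nonneg_right (by nlinarith) hd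
    have hg10 : 0 ≤ g 1 0 := nonneg_of_mul_nonneg_right (by nlinarith) hd
    have hg01 : 0 ≤ g 0 1 := nonneg_of_mul_nonneg_right (by nlinarith) hd
    have hg11 : 0 ≤ g 1 1 := nonneg_of_mul_nonneg_right (by nlinarith) hd
    refine ⟨?_, ?_, ?_⟩ <;>
      simp only [Matrix.mulVec, dotProduct, Fin.sum_univ_two]
    · positivity
    · positivity
    · nlinarith
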